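/- arXiv:1603.08367 — 10 statements merged into one kernel-verified Lean document; each statement's English description precedes it below -/
import Mathlib

section
/- If two pairs of positive target norms (λ₁, λ₂) and (λ̃₁, λ̃₂) satisfy λ₁/λ₂ = λ̃₁/λ̃₂, then the set of best approximations satisfies proj_{S^{(λ₁,λ₂)}}(x) = (λ₂/λ̃₂) · proj_{S^{(λ̃₁,λ̃₂)}}(x) for all x ∈ ℝⁿ; i.e., p is a closest point to x in S^{(λ₁,λ₂)} iff (λ̃₂/λ₂)·p is a closest point to x in S^{(λ̃₁,λ̃₂)}. -/
open Pointwise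

noncomputable section

def l1 {n : ℕ} (x : EuclideanSpace ℝ (Fin n)) : ℝ := ∑ i, |x i|

def projSet {n : ℕ} (M : Set (EuclideanSpace ℝ (Fin n))) (x : EuclideanSpace ℝ (Fin n)) :
    Set (EuclideanSpace ℝ (Fin n)) :=
  {p | p ∈ M ∧ ∀ q ∈ M, ‖p - x‖ ≤ ‖q - x‖}

/-- The target set of the sparseness projection. -/
def sparseTarget {n : ℕ} (l₁ l₂ : ℝ) : Set (EuclideanSpace ℝ (Fin n)) :=
  {s | l1 s = l₁ ∧ ‖s‖ = l₂}

lemma key {n : ℕ} (p r x : EuclideanSpace ℝ (Fin n)) (h : ‖p‖ = ‖r‖) :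
    ‖p - x‖ ≤ ‖r - x‖ ↔ inner ℝ r x ≤ (inner ℝ p x : ℝ) := by
  have e1 := norm_sub_sq_real p x
  have e2 := norm_sub_sq_real r x
  have hsq : ‖p‖ ^ 2 = ‖r‖ ^ 2 := by rw [h]
  constructor
  · intro hh
    have h2 : ‖p - x‖ ^ 2 ≤ ‖r - x‖ ^ 2 :=
      sq_le_sq' (by linarith [norm_nonneg (p - x), norm_nonneg (r - x)]) hh
    linarith
  · intro hh
    have h2 : ‖p - x‖ ^ 2 ≤ ‖r - x‖ ^ 2 := by linarith
    exact (abs_le_of_sq_le_sq' h2 (norm_nonneg _)).2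

theorem projection_scaling
    {n : ℕ} (l₁ l₂ l₁' l₂' : ℝ) (h1 : 0 < l₁) (h2 : 0 < l₂)
    (h1' : 0 < l₁') (h2' : 0 < l₂') (hratio : l₁ / l₂ = l₁' / l₂')
    (x : EuclideanSpace ℝ (Fin n)) :
    projSet (sparseTarget l₁ l₂) x = (l₂ / l₂') • projSet (sparseTarget l₁' l₂') x := by
  set c : ℝ := l₂ / l₂' with hcdef
  have hc : (0 : ℝ) < c := div_pos h2 h2'
  have hratio' : l₁ * l₂' = l₁' * l₂ := by
    field_simp at hratio; linarith
  -- the target sets are related by scaling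
  have hS : sparseTarget (n := n) l₁ l₂ = c • sparseTarget l₁' l₂' := by
    ext s
    rw [Set.mem_smul_set_iff_inv_smul_mem₀ hc.ne']
    simp only [sparseTarget, Set.mem_setOf_eq]
    have hl1 : l1 (c⁻¹ • s) = c⁻¹ * l1 s := by
      simp [l1, Finset.mul_sum, abs_mul, abs_of_pos (inv_pos.2 hc)]
    have hn : ‖c⁻¹ • s‖ = c⁻¹ * ‖s‖ := by
      rw [norm_smul, Real.norm_eq_abs, abs_of_pos (inv_pos.2 hc)]
    rw [hl1, hn]
    constructor
    · rintro ⟨ha, hb⟩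
      rw [ha, hb]
      constructor <;> (rw [hcdef]; field_simp) <;> nlinarith
    · rintro ⟨ha, hb⟩
      have hA : l1 s = c * l₁' := by
        have := ha; field_simp at this ⊢; linarith
      have hB : ‖s‖ = c * l₂' := by
        have := hb; field_simp at this ⊢; linarith
      rw [hA, hB, hcdef]
      constructor <;> field_simp <;> nlinarith
  -- norms on the target sets
  have hnorm : ∀ s ∈ sparseTarget (n := n) l₁' l₂', ‖s‖ = l₂' := fun s hs => hs.2
  rw [hS]
  ext p
  rw [Set.mem_smul_set_iff_inv_smul_mem₀ hc.ne']
  simp only [projSet, Set.mem_setOf_eq]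
  constructor
  · rintro ⟨hp, hmin⟩
    have hp' : c⁻¹ • p ∈ sparseTarget (n := n) l₁' l₂' :=
      (Set.mem_smul_set_iff_inv_smul_mem₀ hc.ne' _ _).1 hp
    have hpnorm : ‖p‖ = c * l₂' := by
      have h3 : ‖c⁻¹ • p‖ = c⁻¹ * ‖p‖ := by
        rw [norm_smul, Real.norm_eq_abs, abs_of_pos (inv_pos.2 hc)]
      rw [hnorm _ hp'] at h3
      field_simp at h3 ⊢
      linarith
    refine ⟨hp', fun r hr => ?_⟩
    have hcr : c • r ∈ c • sparseTarget (n := n) l₁' l₂' := Set.smul_mem_smul_set hr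
    have h1' := hmin (c • r) hcr
    rw [key _ _ _ (by rw [hpnorm, norm_smul, Real.norm_eq_abs, abs_of_pos hc, hnorm _ hr])] at h1'
    rw [key _ _ _ (by rw [hnorm _ hp', hnorm _ hr])]
    have hpc : p = c • (c⁻¹ • p) := by rw [smul_smul, mul_inv_cancel₀ hc.ne', one_smul]
    rw [real_inner_smul_left] at h1'
    rw [hpc, real_inner_smul_left] at h1'
    exact le_of_mul_le_mul_left h1' hc
  · rintro ⟨hp', hmin⟩
    have hp : p ∈ c • sparseTarget (n := n) l₁' l₂' :=
      (Set.mem_smul_set_iff_inv_smul_mem₀ hc.ne' _ _).2 hp'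
    refine ⟨hp, fun q hq => ?_⟩
    obtain ⟨r, hr, rfl⟩ := hq
    have h1' := hmin r hr
    rw [key _ _ _ (by rw [hnorm _ hp', hnorm _ hr])] at h1'
    have hpnorm : ‖p‖ = c * l₂' := by
      have : ‖c⁻¹ • p‖ = c⁻¹ * ‖p‖ := by
        rw [norm_smul, Real.norm_eq_abs, abs_of_pos (inv_pos.2 hc)]
      rw [hnorm _ hp'] at this
      field_simp at this ⊢
      linarith
    rw [key _ _ _ (by rw [hpnorm, norm_smul, Real.norm_eq_abs, abs_of_pos hc, hnorm _ hr])]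
    have hpc : p = c • (c⁻¹ • p) := by rw [smul_smul, mul_inv_cancel₀ hc.ne', one_smul]
    rw [real_inner_smul_left]
    conv_rhs => rw [hpc, real_inner_smul_left]
    exact mul_le_mul_of_nonneg_left h1' hc.le

end
end

section
/- If M ⊆ ℝⁿ is nonempty and permutation-invariant, then the Euclidean projection onto M is order-preserving: for any x ∈ ℝⁿ, any p ∈ proj_M(x), and indices i, j with x_i > x_j, it holds that p_i ≥ p_j. -/
noncomputable section

/-- M is permutation-invariant: membership is stable under coordinate permutations. -/
def PermInvariant {n : ℕ} (M : Set (EuclideanSpace ℝ (Fin n))) : Prop :=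
  ∀ x ∈ M, ∀ τ : Equiv.Perm (Fin n), (WithLp.toLp 2 (fun i => x (τ i)) : EuclideanSpace ℝ (Fin n)) ∈ M

theorem projection_onto_perm_invariant_is_order_preserving
    {n : ℕ} (M : Set (EuclideanSpace ℝ (Fin n))) (hM : M.Nonempty)
    (hperm : PermInvariant M)
    (x : EuclideanSpace ℝ (Fin n)) (p : EuclideanSpace ℝ (Fin n))
    (hp : p ∈ projSet M x) (i j : Fin n) (hij : x j < x i) :
    p j ≤ p i := by
  have hne : i ≠ j := fun h => absurd hij (by rw [h]; exact lt_irrefl _)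
  set q : EuclideanSpace ℝ (Fin n) := (WithLp.toLp 2 (fun k => p (Equiv.swap i j k))) with hq
  have hqM : q ∈ M := hperm p hp.1 (Equiv.swap i j)
  have hle : ‖p - x‖ ≤ ‖q - x‖ := hp.2 q hqM
  have hsq : ‖p - x‖ ^ 2 ≤ ‖q - x‖ ^ 2 :=
    pow_le_pow_left₀ (norm_nonneg _) hle 2
  have hnorm : ∀ y : EuclideanSpace ℝ (Fin n), ‖y‖ ^ 2 = ∑ k, (y k) ^ 2 := by
    intro y
    rw [EuclideanSpace.norm_eq, Real.sq_sqrt (by positivity)]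
    simp [Real.norm_eq_abs, sq_abs]
  have hsum : ∑ k, (p k - x k) ^ 2 ≤ ∑ k, (q k - x k) ^ 2 := by
    have h1 := hnorm (p - x)
    have h2 := hnorm (q - x)
    simp only [WithLp.ofLp_sub, Pi.sub_apply] at h1 h2
    rw [← h1, ← h2]
    simpa using hsq
  have hsplit : ∀ f : Fin n → ℝ,
      ∑ k, f k = (∑ k ∈ Finset.univ \ {i, j}, f k) + (f i + f j) := by
    intro f
    rw [← Finset.sum_sdiff (Finset.subset_univ ({i, j} : Finset (Fin n))),
      Finset.sum_pair hne]
  have heq : ∀ k ∈ Finset.univ \ ({i, j} : Finset (Fin n)),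
      (p k - x k) ^ 2 = (q k - x k) ^ 2 := by
    intro k hk
    simp only [Finset.mem_sdiff, Finset.mem_insert, Finset.mem_singleton] at hk
    push_neg at hk
    have hs : Equiv.swap i j k = k := Equiv.swap_apply_of_ne_of_ne hk.2.1 hk.2.2
    show (p k - x k) ^ 2 = (p (Equiv.swap i j k) - x k) ^ 2
    rw [hs]
  rw [hsplit, hsplit, Finset.sum_congr rfl heq, add_le_add_iff_left] at hsum
  have hqi : q i = p j := congrArg p (Equiv.swap_apply_left i j)
  have hqj : q j = p i := congrArg p (Equiv.swap_apply_right i j)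
  rw [hqi, hqj] at hsum
  nlinarith [hsum, hij]

end
end

section
/- If M ⊆ ℝⁿ is nonempty, permutation-invariant, and the projection of x onto M is a unique point p, then x_i = x_j implies p_i = p_j. -/
noncomputable section

theorem unique_proj_equal_entries
    {n : ℕ} (M : Set (EuclideanSpace ℝ (Fin n))) (hM : M.Nonempty)
    (hperm : PermInvariant M)
    (x p : EuclideanSpace ℝ (Fin n)) (hp : projSet M x = {p})
    (i j : Fin n) (hij : x i = x j) :
    p i = p j := by
  have hpmem : p ∈ projSet M x := by rw [hp]; rfl
  obtain ⟨hpM, hpmin⟩ := hpmem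
  have τdef : True := trivial
  let τ : Equiv.Perm (Fin n) := Equiv.swap i j
  let q : EuclideanSpace ℝ (Fin n) := WithLp.toLp 2 (fun k => p (τ k))
  have hqM : q ∈ M := hperm p hpM τ
  have hxτ : ∀ k, x (τ k) = x k := by
    intro k
    show x (Equiv.swap i j k) = x k
    rcases eq_or_ne k i with rfl | hki
    · rw [Equiv.swap_apply_left, ← hij]
    rcases eq_or_ne k j with rfl | hkj
    · rw [Equiv.swap_apply_right, hij]
    · rw [Equiv.swap_apply_of_ne_of_ne hki hkj]
  have hnorm : ‖q - x‖ = ‖p - x‖ := by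
    rw [EuclideanSpace.norm_eq, EuclideanSpace.norm_eq]
    congr 1
    rw [← Equiv.sum_comp τ (fun k => ‖(p - x) k‖ ^ 2)]
    apply Finset.sum_congr rfl
    intro k _
    simp only [q, PiLp.sub_apply, PiLp.toLp_apply, hxτ k]
  have hqproj : q ∈ projSet M x := by
    refine ⟨hqM, fun r hr => ?_⟩
    rw [hnorm]
    exact hpmin r hr
  rw [hp] at hqproj
  have : q = p := hqproj
  have h2 : q j = p j := congrFun (congrArg WithLp.ofLp this) j
  have h3 : q j = p i := by
    show p (Equiv.swap i j j) = p i
    rw [Equiv.swap_apply_right]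
  rw [h3] at h2
  exact h2

end
end

section
/- If M ⊆ ℝⁿ is nonempty, permutation-invariant and reflection-invariant, then the Euclidean projection onto M is absolutely order-preserving: for all x ∈ ℝⁿ, p ∈ proj_M(x), and indices i, j with |x_i| > |x_j|, it holds that |p_i| ≥ |p_j|. -/
noncomputable section

def ReflInvariant {n : ℕ} (M : Set (EuclideanSpace ℝ (Fin n))) : Prop :=
  ∀ x ∈ M, ∀ b : Fin n → ℝ, (∀ i, b i = 1 ∨ b i = -1) →
    (WithLp.toLp 2 (fun i => b i * x i) : EuclideanSpace ℝ (Fin n)) ∈ M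

theorem projection_absolutely_order_preserving
    {n : ℕ} (M : Set (EuclideanSpace ℝ (Fin n))) (hM : M.Nonempty)
    (hperm : PermInvariant M) (hrefl : ReflInvariant M)
    (x p : EuclideanSpace ℝ (Fin n)) (hp : p ∈ projSet M x)
    (i j : Fin n) (hij : |x j| < |x i|) :
    |p j| ≤ |p i| := by
  by_contra hcon
  push_neg at hcon
  have hne : i ≠ j := by
    rintro rfl; exact absurd rfl (ne_of_lt hij)
  -- sign vector
  set b : Fin n → ℝ := fun k =>
    if k = i then (if 0 ≤ x i * p j then (1:ℝ) else -1)
    else if k = j then (if 0 ≤ x j * p i then (1:ℝ) else -1) else 1 with hb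
  have hbval : ∀ k, b k = 1 ∨ b k = -1 := by
    intro k
    simp only [hb]
    split_ifs <;> simp
  -- the competitor q
  have hpM := hperm p hp.1 (Equiv.swap i j)
  have hqM := hrefl _ hpM b hbval
  set q : EuclideanSpace ℝ (Fin n) :=
    WithLp.toLp 2 (fun k => b k * (fun k => p (Equiv.swap i j k)) k) with hq
  have hqi : q i = b i * p j := by
    show b i * p (Equiv.swap i j i) = b i * p j
    rw [Equiv.swap_apply_left]
  have hqj : q j = b j * p i := by
    show b j * p (Equiv.swap i j j) = b j * p i
    rw [Equiv.swap_apply_right]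
  have hqk : ∀ k, k ≠ i → k ≠ j → q k = p k := by
    intro k hki hkj
    show b k * p (Equiv.swap i j k) = p k
    rw [Equiv.swap_apply_of_ne_of_ne hki hkj]
    have : b k = 1 := by simp only [hb]; rw [if_neg hki, if_neg hkj]
    rw [this, one_mul]
  have hbidef : b i = if 0 ≤ x i * p j then (1:ℝ) else -1 := by
    simp only [hb]
    simp [hne]
  have hbjdef : b j = if 0 ≤ x j * p i then (1:ℝ) else -1 := by
    simp only [hb]
    rw [if_neg (hne.symm : j ≠ i)]
    simp
  have hbi : b i * p j * x i = |p j| * |x i| := by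
    rw [hbidef]
    rcases le_or_gt 0 (x i * p j) with h | h
    · rw [if_pos h, one_mul, mul_comm (|p j|) (|x i|), ← abs_mul, abs_of_nonneg h]; ring
    · rw [if_neg (not_le.mpr h), mul_comm (|p j|) (|x i|), ← abs_mul, abs_of_neg h]; ring
  have hbj : b j * p i * x j = |p i| * |x j| := by
    rw [hbjdef]
    rcases le_or_gt 0 (x j * p i) with h | h
    · rw [if_pos h, one_mul, mul_comm (|p i|) (|x j|), ← abs_mul, abs_of_nonneg h]; ring
    · rw [if_neg (not_le.mpr h), mul_comm (|p i|) (|x j|), ← abs_mul, abs_of_neg h]; ring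
  have hbi2 : (b i) ^ 2 = 1 := by rcases hbval i with h | h <;> rw [h] <;> norm_num
  have hbj2 : (b j) ^ 2 = 1 := by rcases hbval j with h | h <;> rw [h] <;> norm_num
  -- compare squared distances
  have hsplit : ∀ v : Fin n → ℝ,
      ∑ k, v k = (∑ k ∈ Finset.univ \ ({i, j} : Finset (Fin n)), v k) + (v i + v j) := by
    intro v
    rw [← Finset.sum_pair hne, Finset.sum_sdiff (Finset.subset_univ _)]
  have hrest : (∑ k ∈ Finset.univ \ ({i, j} : Finset (Fin n)), (q k - x k) ^ 2)
      = ∑ k ∈ Finset.univ \ ({i, j} : Finset (Fin n)), (p k - x k) ^ 2 := by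
    apply Finset.sum_congr rfl
    intro k hk
    simp only [Finset.mem_sdiff, Finset.mem_insert, Finset.mem_singleton] at hk
    push_neg at hk
    rw [hqk k hk.2.1 hk.2.2]
  have h2 : (q i - x i) ^ 2 + (q j - x j) ^ 2 < (p i - x i) ^ 2 + (p j - x j) ^ 2 := by
    rw [hqi, hqj]
    have h3 : p i * x i ≤ |p i| * |x i| := by
      rw [← abs_mul]; exact le_abs_self _
    have h4 : p j * x j ≤ |p j| * |x j| := by
      rw [← abs_mul]; exact le_abs_self _
    have h5 : (|p j| - |p i|) * (|x i| - |x j|) > 0 :=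
      mul_pos (by linarith) (by linarith)
    have h6 : (|p i|) ^ 2 = (p i) ^ 2 := sq_abs _
    have h7 : (|p j|) ^ 2 = (p j) ^ 2 := sq_abs _
    nlinarith [hbi, hbj, hbi2, hbj2]
  have hsum : ∑ k, (q k - x k) ^ 2 < ∑ k, (p k - x k) ^ 2 := by
    rw [hsplit (fun k => (q k - x k) ^ 2), hsplit (fun k => (p k - x k) ^ 2), hrest]
    linarith
  have hnorm : ‖q - x‖ < ‖p - x‖ := by
    rw [EuclideanSpace.norm_eq, EuclideanSpace.norm_eq]
    apply Real.sqrt_lt_sqrt (by positivity)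
    simpa [sq_abs] using hsum
  exact absurd (hp.2 q hqM) (not_le.mpr hnorm)

end
end

section
/- Let r ∈ H with r ≠ m, where m = (λ₁/n)e, and set s = m + δ(r − m) with δ = √ρ/‖r − m‖₂ and ρ = λ₂² − λ₁²/n ≥ 0. Then s ∈ L = H ∩ K, and for every q ∈ L it holds that ‖q − r‖₂² − ‖s − r‖₂² = (1/δ)‖q − s‖₂². Consequently s is the unique projection of r onto L. -/
set_option maxHeartbeats 1000000

noncomputable section

local notation "⟪" x ", " y "⟫" => @inner ℝ _ _ x y

theorem proj_onto_hypercircle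
    {n : ℕ} (hn : 0 < n) (l₁ l₂ : ℝ) (h1 : 0 < l₁) (h2 : 0 < l₂)
    (hcompat : l₁ ≤ Real.sqrt n * l₂)
    (H K L : Set (EuclideanSpace ℝ (Fin n)))
    (hH : H = {a | ∑ i, a i = l₁})
    (hK : K = {q | ‖q‖ = l₂})
    (hL : L = H ∩ K)
    (m : EuclideanSpace ℝ (Fin n)) (hm : m = (WithLp.toLp 2 (fun _ => l₁ / n) : EuclideanSpace ℝ (Fin n)))
    (ρ : ℝ) (hρ : ρ = l₂ ^ 2 - l₁ ^ 2 / n)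
    (r : EuclideanSpace ℝ (Fin n)) (hr : r ∈ H) (hrm : r ≠ m)
    (δ : ℝ) (hδ : δ = Real.sqrt ρ / ‖r - m‖)
    (s : EuclideanSpace ℝ (Fin n)) (hs : s = m + δ • (r - m)) :
    s ∈ L ∧ (∀ q ∈ L, ‖q - r‖ ^ 2 - ‖s - r‖ ^ 2 = (1 / δ) * ‖q - s‖ ^ 2) ∧
      projSet L r = {s} := by
  have hn' : (0:ℝ) < n := by exact_mod_cast hn
  -- sum of m
  have hsum_m : ∑ i, m i = l₁ := by
    rw [hm]
    simp [Finset.sum_const]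
    field_simp
  have hinner_m : ∀ a : EuclideanSpace ℝ (Fin n), ⟪a, m⟫ = (∑ i, a i) * (l₁ / n) := by
    intro a
    rw [hm]
    simp [PiLp.inner_apply, RCLike.inner_apply, ← Finset.sum_mul]
    rw [Finset.sum_mul]; exact Finset.sum_congr rfl (fun _ _ => mul_comm _ _)
  have hmm : ⟪m, m⟫ = l₁ ^ 2 / n := by
    rw [hinner_m, hsum_m]; ring
  have hρ0 : (0:ℝ) ≤ ρ := by
    have h : l₁ ^ 2 ≤ (Real.sqrt n * l₂) ^ 2 := by
      apply pow_le_pow_left₀ h1.le hcompat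
    rw [mul_pow, Real.sq_sqrt hn'.le] at h
    rw [hρ]
    have h4 : l₁ ^ 2 / n ≤ l₂ ^ 2 := by rw [div_le_iff₀ hn']; nlinarith
    linarith
  have hc : (0:ℝ) < ‖r - m‖ := by
    rw [norm_pos_iff]
    exact sub_ne_zero_of_ne hrm
  have hδ0 : (0:ℝ) ≤ δ := by
    rw [hδ]
    positivity
  have hsum_r : ∑ i, r i = l₁ := by rw [hH] at hr; exact hr
  have hsum_rm : ∑ i, (r - m) i = 0 := by
    simp only [PiLp.sub_apply, Finset.sum_sub_distrib, hsum_r, hsum_m, sub_self]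
  have hsum_s : ∑ i, s i = l₁ := by
    rw [hs]
    simp only [PiLp.add_apply, PiLp.smul_apply, smul_eq_mul, Finset.sum_add_distrib,
      ← Finset.mul_sum, hsum_m, hsum_rm, mul_zero, add_zero]
  have hδc : δ ^ 2 * ‖r - m‖ ^ 2 = ρ := by
    rw [hδ, div_pow, Real.sq_sqrt hρ0]
    field_simp
  have hmrm : ⟪m, r - m⟫ = 0 := by
    rw [real_inner_comm, hinner_m, hsum_rm, zero_mul]
  have hvv : ⟪r - m, r - m⟫ = ‖r - m‖ ^ 2 := real_inner_self_eq_norm_sq _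
  have hss : ⟪s, s⟫ = l₂ ^ 2 := by
    rw [hs, real_inner_add_add_self, real_inner_smul_right, hmrm,
      real_inner_smul_left, real_inner_smul_right, hvv, hmm]
    rw [hρ] at hδc
    nlinarith [hδc]
  have hsK : ‖s‖ = l₂ := by
    have : ‖s‖ ^ 2 = l₂ ^ 2 := by rw [← real_inner_self_eq_norm_sq, hss]
    nlinarith [norm_nonneg s]
  have hsL : s ∈ L := by
    rw [hL, hH, hK]
    exact ⟨hsum_s, hsK⟩
  -- key: for q ∈ L, ‖q - s‖² = 2 δ ⟪s - q, r⟫ and ‖q-r‖²-‖s-r‖² = 2 ⟪s-q,r⟫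
  have key : ∀ q ∈ L, ‖q - s‖ ^ 2 = 2 * δ * ⟪s - q, r⟫ ∧
      ‖q - r‖ ^ 2 - ‖s - r‖ ^ 2 = 2 * ⟪s - q, r⟫ := by
    intro q hq
    rw [hL, hH, hK] at hq
    obtain ⟨hqH, hqK⟩ := hq
    have hq1 : ∑ i, q i = l₁ := hqH
    have hq2 : ‖q‖ = l₂ := hqK
    have hqq : ⟪q, q⟫ = l₂ ^ 2 := by
      rw [real_inner_self_eq_norm_sq, hq2]
    have hsqm : ⟪s - q, m⟫ = 0 := by
      rw [hinner_m]
      simp only [PiLp.sub_apply, Finset.sum_sub_distrib, hsum_s, hq1, sub_self, zero_mul]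
    have hkey : ⟪s - q, s⟫ = δ * ⟪s - q, r⟫ := by
      have h1 : ⟪s - q, s⟫ = ⟪s - q, m⟫ + δ * ⟪s - q, r - m⟫ := by
        rw [hs]
        rw [inner_add_right, real_inner_smul_right]
      rw [h1, hsqm, zero_add, inner_sub_right, hsqm, sub_zero]
    constructor
    · have hthis : ‖q - s‖ ^ 2 = ⟪q, q⟫ - 2 * ⟪q, s⟫ + ⟪s, s⟫ := by
        rw [← real_inner_self_eq_norm_sq, inner_sub_sub_self, real_inner_comm s q]
        ring
      rw [hthis, hqq, hss]
      rw [inner_sub_left, hss] at hkey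
      have hcs : ⟪s, q⟫ = ⟪q, s⟫ := real_inner_comm q s
      linarith [hkey, hcs]
    · rw [norm_sub_sq_real, norm_sub_sq_real, inner_sub_left, hq2, hsK]
      ring
  have heq : ∀ q ∈ L, ‖q - r‖ ^ 2 - ‖s - r‖ ^ 2 = (1 / δ) * ‖q - s‖ ^ 2 := by
    intro q hq
    obtain ⟨h1', h2'⟩ := key q hq
    by_cases hδz : δ = 0
    · have hqs : q = s := by
        have : ‖q - s‖ ^ 2 = 0 := by rw [h1', hδz]; ring
        have : ‖q - s‖ = 0 := by nlinarith [norm_nonneg (q - s)]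
        rw [norm_eq_zero, sub_eq_zero] at this
        exact this
      subst hqs
      simp
    · rw [h1', h2']
      rw [one_div, inv_mul_eq_div, eq_div_iff hδz]
      ring
  refine ⟨hsL, heq, ?_⟩
  ext p
  simp only [projSet, Set.mem_setOf_eq, Set.mem_singleton_iff]
  constructor
  · rintro ⟨hpL, hmin⟩
    by_cases hδz : δ = 0
    · obtain ⟨h1', _⟩ := key p hpL
      have : ‖p - s‖ ^ 2 = 0 := by rw [h1', hδz]; ring
      have : ‖p - s‖ = 0 := by nlinarith [norm_nonneg (p - s)]
      rw [norm_eq_zero, sub_eq_zero] at this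
      exact this
    · have hδpos : 0 < δ := lt_of_le_of_ne hδ0 (Ne.symm hδz)
      have h1' := hmin s hsL
      have h2' := heq p hpL
      have hle : ‖p - r‖ ^ 2 ≤ ‖s - r‖ ^ 2 := by
        apply pow_le_pow_left₀ (norm_nonneg _) h1'
      have : ‖p - s‖ ^ 2 ≤ 0 := by
        have h3 : (1 / δ) * ‖p - s‖ ^ 2 ≤ 0 := by linarith
        nlinarith [one_div_pos.mpr hδpos]
      have : ‖p - s‖ = 0 := by nlinarith [norm_nonneg (p - s)]
      rw [norm_eq_zero, sub_eq_zero] at this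
      exact this
  · intro hps
    rw [hps]
    refine ⟨hsL, fun q hq => ?_⟩
    have h2' := heq q hq
    have h3 : 0 ≤ (1 / δ) * ‖q - s‖ ^ 2 := by positivity
    have hle : ‖s - r‖ ^ 2 ≤ ‖q - r‖ ^ 2 := by linarith
    nlinarith [norm_nonneg (s - r), norm_nonneg (q - r)]

end
end

section
/- The projection onto D = S≥0^{(λ₁,λ₂)} is invariant under positive affine transformations of the argument: for all α > 0, β ∈ ℝ, and x ∈ ℝⁿ, proj_D(αx + βe) = proj_D(x). -/
noncomputable section

lemma norm_sub_le_iff_inner_aux {n : ℕ} (p q y : EuclideanSpace ℝ (Fin n))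
    (h : ‖p‖ = ‖q‖) :
    ‖p - y‖ ≤ ‖q - y‖ ↔ (inner ℝ q y : ℝ) ≤ inner ℝ p y := by
  rw [← pow_le_pow_iff_left₀ (norm_nonneg _) (norm_nonneg _) two_ne_zero,
    norm_sub_sq_real, norm_sub_sq_real, h]
  constructor <;> intro <;> linarith

theorem proj_invariant_under_positive_affine_transformation
    {n : ℕ} (l₁ l₂ : ℝ) (h1 : 0 < l₁) (h2 : 0 < l₂)
    (hlow : l₂ ≤ l₁) (hhigh : l₁ ≤ Real.sqrt n * l₂)
    (D : Set (EuclideanSpace ℝ (Fin n)))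
    (hD : D = {s | (∀ i, 0 ≤ s i) ∧ l1 s = l₁ ∧ ‖s‖ = l₂})
    (α β : ℝ) (hα : 0 < α) (x : EuclideanSpace ℝ (Fin n)) :
    projSet D ((WithLp.toLp 2 (fun i => α * x i + β) : EuclideanSpace ℝ (Fin n))) = projSet D x := by
  subst hD
  have hsum : ∀ s : EuclideanSpace ℝ (Fin n),
      (∀ i, 0 ≤ s i) → l1 s = l₁ → ∑ i, s i = l₁ := by
    intro s hs hl
    rw [← hl, l1]
    exact Finset.sum_congr rfl fun i _ => (abs_of_nonneg (hs i)).symm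
  have hinner : ∀ s : EuclideanSpace ℝ (Fin n), (∀ i, 0 ≤ s i) → l1 s = l₁ →
      (inner ℝ s (WithLp.toLp 2 (fun i => α * x i + β) : EuclideanSpace ℝ (Fin n)) : ℝ)
        = α * inner ℝ s x + β * l₁ := by
    intro s hs hl
    simp only [PiLp.inner_apply, RCLike.inner_apply', conj_trivial, PiLp.toLp_apply]
    have hcong : ∀ i ∈ Finset.univ, s i * (α * x i + β) = α * (s i * x i) + β * s i :=
      fun i _ => by ring
    rw [Finset.sum_congr rfl hcong, Finset.sum_add_distrib, ← Finset.mul_sum,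
      ← Finset.mul_sum, hsum s hs hl]
  ext p
  simp only [projSet, Set.mem_setOf_eq]
  constructor
  · rintro ⟨⟨hp0, hpl1, hpn⟩, hmin⟩
    refine ⟨⟨hp0, hpl1, hpn⟩, fun q hq => ?_⟩
    obtain ⟨hq0, hql1, hqn⟩ := hq
    rw [norm_sub_le_iff_inner_aux p q x (hpn.trans hqn.symm)]
    have h := hmin q ⟨hq0, hql1, hqn⟩
    rw [norm_sub_le_iff_inner_aux p q _ (hpn.trans hqn.symm), hinner p hp0 hpl1,
      hinner q hq0 hql1] at h
    nlinarith
  · rintro ⟨⟨hp0, hpl1, hpn⟩, hmin⟩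
    refine ⟨⟨hp0, hpl1, hpn⟩, fun q hq => ?_⟩
    obtain ⟨hq0, hql1, hqn⟩ := hq
    rw [norm_sub_le_iff_inner_aux p q _ (hpn.trans hqn.symm), hinner p hp0 hpl1,
      hinner q hq0 hql1]
    have h := hmin q ⟨hq0, hql1, hqn⟩
    rw [norm_sub_le_iff_inner_aux p q x (hpn.trans hqn.symm)] at h
    nlinarith

end
end

section
/- Let q be in the scaled canonical simplex C ⊆ ℝⁿ, let I ⊆ {1,…,n} be a nonempty index set, let J = Iᶜ, and let s be the Euclidean projection of q onto the face C_I = {c ∈ C : c_i = 0 for all i ∉ I}. Then ‖q − v‖₂² = ‖q − s‖₂² + ‖s − v‖₂² for all v ∈ C_I. If additionally max_{j∈J} q_j ≤ min_{i∈I} q_i, then ‖s‖₂ ≥ ‖q‖₂, with equality if and only if q_j = 0 for all j ∈ J. -/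
noncomputable section

open RealInnerProductSpace

theorem proj_onto_simplex_face
    {n : ℕ} (l₁ : ℝ) (h1 : 0 < l₁)
    (C : Set (EuclideanSpace ℝ (Fin n)))
    (hC : C = {c | (∀ i, 0 ≤ c i) ∧ ∑ i, c i = l₁})
    (I : Set (Fin n)) (hI : I.Nonempty)
    (CI : Set (EuclideanSpace ℝ (Fin n)))
    (hCI : CI = {c ∈ C | ∀ i ∉ I, c i = 0})
    (q : EuclideanSpace ℝ (Fin n)) (hq : q ∈ C)
    (s : EuclideanSpace ℝ (Fin n)) (hs : s ∈ projSet CI q) :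
    (∀ v ∈ CI, ‖q - v‖ ^ 2 = ‖q - s‖ ^ 2 + ‖s - v‖ ^ 2) ∧
      ((∀ j ∉ I, ∀ i ∈ I, q j ≤ q i) →
        (‖q‖ ≤ ‖s‖ ∧ (‖s‖ = ‖q‖ ↔ ∀ j ∉ I, q j = 0))) := by
  classical
  -- basic facts
  have normsq : ∀ x : EuclideanSpace ℝ (Fin n), ‖x‖ ^ 2 = ∑ i, (x i) ^ 2 := by
    intro x
    rw [EuclideanSpace.norm_eq, Real.sq_sqrt (by positivity)]
    simp [sq_abs]
  have hqnn : ∀ i, 0 ≤ q i := by rw [hC] at hq; exact hq.1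
  have hqsum : ∑ i, q i = l₁ := by rw [hC] at hq; exact hq.2
  set IF : Finset (Fin n) := Finset.univ.filter (· ∈ I) with hIF
  set JF : Finset (Fin n) := Finset.univ.filter (· ∉ I) with hJF
  obtain ⟨i0, hi0⟩ := hI
  have hi0F : i0 ∈ IF := by simp [hIF, hi0]
  have hcard : (0:ℝ) < (IF.card : ℝ) := by
    exact_mod_cast Finset.card_pos.mpr ⟨i0, hi0F⟩
  set S : ℝ := ∑ j ∈ JF, q j with hS
  set A : ℝ := ∑ i ∈ IF, q i with hA
  have hSnn : 0 ≤ S := Finset.sum_nonneg fun j _ => hqnn j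
  have hAnn : 0 ≤ A := Finset.sum_nonneg fun i _ => hqnn i
  have hsplit : A + S = l₁ := by
    rw [hA, hS, hIF, hJF, Finset.sum_filter_add_sum_filter_not Finset.univ (· ∈ I) q, hqsum]
  set t : ℝ := S / IF.card with ht
  have htnn : 0 ≤ t := div_nonneg hSnn hcard.le
  have hcardt : (IF.card : ℝ) * t = S := by
    rw [ht]; field_simp
  -- the explicit projection point
  set p : EuclideanSpace ℝ (Fin n) := WithLp.toLp 2 (fun i => if i ∈ I then q i + t else 0) with hp
  have hpI : ∀ i ∈ I, p i = q i + t := fun i hi => by simp [hp, hi]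
  have hpJ : ∀ i ∉ I, p i = 0 := fun i hi => by simp [hp, hi]
  have hpsumI : ∑ i ∈ IF, p i = l₁ := by
    have : ∑ i ∈ IF, p i = ∑ i ∈ IF, (q i + t) := by
      apply Finset.sum_congr rfl
      intro i hi
      exact hpI i (by simpa [hIF] using hi)
    rw [this, Finset.sum_add_distrib, Finset.sum_const, nsmul_eq_mul, ← hA, hcardt, hsplit]
  have hpsum : ∑ i, p i = l₁ := by
    rw [← Finset.sum_filter_add_sum_filter_not Finset.univ (· ∈ I) p, ← hIF, ← hJF]
    have : ∑ j ∈ JF, p j = 0 := by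
      apply Finset.sum_eq_zero
      intro j hj
      exact hpJ j (by simpa [hJF] using hj)
    rw [hpsumI, this, add_zero]
  have hpCI : p ∈ CI := by
    rw [hCI, hC]
    refine ⟨⟨fun i => ?_, hpsum⟩, hpJ⟩
    by_cases hi : i ∈ I
    · rw [hpI i hi]; exact add_nonneg (hqnn i) htnn
    · rw [hpJ i hi]
  -- sum over IF for members of CI
  have hsumIF : ∀ v ∈ CI, ∑ i ∈ IF, v i = l₁ := by
    intro v hv
    rw [hCI, hC] at hv
    obtain ⟨⟨_, hvsum⟩, hvJ⟩ := hv
    rw [← hvsum, ← Finset.sum_filter_add_sum_filter_not Finset.univ (· ∈ I) v, ← hIF, ← hJF]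
    have : ∑ j ∈ JF, v j = 0 := Finset.sum_eq_zero fun j hj => hvJ j (by simpa [hJF] using hj)
    rw [this, add_zero]
  -- the orthogonality relation
  have hinner : ∀ v ∈ CI, ⟪q - p, p - v⟫ = 0 := by
    intro v hv
    have hvJ : ∀ i ∉ I, v i = 0 := by rw [hCI] at hv; exact hv.2
    have : ⟪q - p, p - v⟫ = ∑ i, (q i - p i) * (p i - v i) := by
      simp [PiLp.inner_apply, RCLike.inner_apply, mul_comm]
    rw [this, ← Finset.sum_filter_add_sum_filter_not Finset.univ (· ∈ I) _, ← hIF, ← hJF]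
    have h2 : ∑ j ∈ JF, (q j - p j) * (p j - v j) = 0 := by
      apply Finset.sum_eq_zero
      intro j hj
      have hj' : j ∉ I := by simpa [hJF] using hj
      rw [hpJ j hj', hvJ j hj']
      ring
    have h3 : ∑ i ∈ IF, (q i - p i) * (p i - v i) = ∑ i ∈ IF, (-t) * (p i - v i) := by
      apply Finset.sum_congr rfl
      intro i hi
      have hi' : i ∈ I := by simpa [hIF] using hi
      rw [hpI i hi']
      ring
    rw [h2, h3, add_zero, ← Finset.mul_sum, Finset.sum_sub_distrib, hpsumI, hsumIF v hv]
    ring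
  -- Pythagoras for p
  have hpyth : ∀ v ∈ CI, ‖q - v‖ ^ 2 = ‖q - p‖ ^ 2 + ‖p - v‖ ^ 2 := by
    intro v hv
    have : q - v = (q - p) + (p - v) := by abel
    rw [this, norm_add_sq_real, hinner v hv]
    ring
  have norm_le_of_sq : ∀ a b : EuclideanSpace ℝ (Fin n), ‖a‖ ^ 2 ≤ ‖b‖ ^ 2 → ‖a‖ ≤ ‖b‖ := by
    intro a b h
    have := Real.sqrt_le_sqrt h
    rwa [Real.sqrt_sq (norm_nonneg _), Real.sqrt_sq (norm_nonneg _)] at this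
  -- s = p
  have hsp : s = p := by
    obtain ⟨hsCI, hsmin⟩ := hs
    have h1' : ‖s - q‖ ≤ ‖p - q‖ := hsmin p hpCI
    have h2' : ‖q - s‖ ^ 2 = ‖q - p‖ ^ 2 + ‖p - s‖ ^ 2 := hpyth s hsCI
    have h3' : ‖q - s‖ ^ 2 ≤ ‖q - p‖ ^ 2 := by
      rw [norm_sub_rev q s, norm_sub_rev q p]
      exact pow_le_pow_left₀ (norm_nonneg _) h1' 2
    have h4' : ‖p - s‖ ^ 2 ≤ 0 := by linarith
    have h5' : ‖p - s‖ = 0 := by nlinarith [norm_nonneg (p - s)]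
    have := norm_eq_zero.mp h5'
    symm
    rwa [sub_eq_zero] at this
  subst hsp
  refine ⟨hpyth, ?_⟩
  intro hcond
  -- quantitative facts
  set B : ℝ := ∑ j ∈ JF, (q j) ^ 2 with hB
  have hBle : B ≤ t * A := by
    have step : ∀ i ∈ IF, B ≤ S * q i := by
      intro i hi
      have hi' : i ∈ I := by simpa [hIF] using hi
      rw [hB, hS, Finset.sum_mul]
      apply Finset.sum_le_sum
      intro j hj
      have hj' : j ∉ I := by simpa [hJF] using hj
      have := hcond j hj' i hi'
      nlinarith [hqnn j]
    have : (IF.card : ℝ) * B ≤ S * A := by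
      calc (IF.card : ℝ) * B = ∑ _i ∈ IF, B := by
            rw [Finset.sum_const, nsmul_eq_mul]
          _ ≤ ∑ i ∈ IF, S * q i := Finset.sum_le_sum step
          _ = S * A := by rw [hA, Finset.mul_sum]
    rw [ht]
    rw [div_mul_eq_mul_div, le_div_iff₀ hcard]
    nlinarith
  have hdiff : ‖p‖ ^ 2 - ‖q‖ ^ 2 = 2 * t * A + t * S - B := by
    rw [normsq, normsq]
    rw [← Finset.sum_filter_add_sum_filter_not Finset.univ (· ∈ I) (fun i => (p i)^2),
        ← Finset.sum_filter_add_sum_filter_not Finset.univ (· ∈ I) (fun i => (q i)^2),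
        ← hIF, ← hJF]
    have e1 : ∑ j ∈ JF, (p j) ^ 2 = 0 := by
      apply Finset.sum_eq_zero
      intro j hj
      rw [hpJ j (by simpa [hJF] using hj)]
      ring
    have e2 : ∑ i ∈ IF, (p i) ^ 2 = ∑ i ∈ IF, ((q i)^2 + 2 * t * q i + t^2) := by
      apply Finset.sum_congr rfl
      intro i hi
      rw [hpI i (by simpa [hIF] using hi)]
      ring
    rw [e1, e2, ← hB]
    simp only [Finset.sum_add_distrib, Finset.sum_const, nsmul_eq_mul]
    rw [← Finset.mul_sum, ← hA]
    have hct2 : (IF.card:ℝ) * t ^ 2 = t * S := by rw [← hcardt]; ring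
    linarith
  have hge : t * A + t * S ≤ ‖p‖ ^ 2 - ‖q‖ ^ 2 := by linarith
  constructor
  · apply norm_le_of_sq
    nlinarith [mul_nonneg htnn hAnn, mul_nonneg htnn hSnn]
  · constructor
    · intro heq
      have hsq : ‖p‖ ^ 2 = ‖q‖ ^ 2 := by rw [heq]
      have hSz : S = 0 := by
        have h0 : t * S ≤ 0 := by nlinarith [mul_nonneg htnn hAnn]
        have h2' := mul_le_mul_of_nonneg_left h0 hcard.le
        have h3' : S * S = (IF.card:ℝ) * (t * S) := by rw [← hcardt]; ring
        have h4' : S * S ≤ 0 := by rw [h3']; linarith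
        exact mul_self_eq_zero.mp (le_antisymm h4' (mul_self_nonneg S))
      intro j hj
      have hjF : j ∈ JF := by simp [hJF, hj]
      have := (Finset.sum_eq_zero_iff_of_nonneg (fun j _ => hqnn j)).mp hSz j hjF
      exact this
    · intro hz
      have hSz : S = 0 := Finset.sum_eq_zero fun j hj => hz j (by simpa [hJF] using hj)
      have htz : t = 0 := by rw [ht, hSz, zero_div]
      have hBz : B = 0 := Finset.sum_eq_zero fun j hj => by
        rw [hz j (by simpa [hJF] using hj)]; ring
      have : ‖p‖ ^ 2 = ‖q‖ ^ 2 := by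
        have hz0 : (2:ℝ) * t * A + t * S - B = 0 := by rw [htz, hSz, hBz]; ring
        linarith [hdiff]
      have h2'' := congrArg Real.sqrt this
      rwa [Real.sqrt_sq (norm_nonneg _), Real.sqrt_sq (norm_nonneg _)] at h2''
end
end

section
/- Let v ∈ C_I with ‖v‖₂ < λ₂, where C_I is a face of the scaled canonical simplex C, and let q be any best approximation to v from D = {s ∈ ℝ≥0ⁿ : ‖s‖₁ = λ₁, ‖s‖₂ = λ₂}. Then q ∈ C_I, i.e., q_i = 0 for all i ∉ I. -/
noncomputable section

lemma normsq_eq {n : ℕ} (x : EuclideanSpace ℝ (Fin n)) : ‖x‖ ^ 2 = ∑ i, x i ^ 2 := by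
  rw [EuclideanSpace.norm_eq, Real.sq_sqrt (by positivity)]
  simp [Real.norm_eq_abs, sq_abs]

set_option maxHeartbeats 1000000 in
theorem proj_from_simplex_face_stays_on_face
    {n : ℕ} (l₁ l₂ : ℝ) (h1 : 0 < l₁) (h2 : 0 < l₂)
    (hlow : l₂ ≤ l₁) (hhigh : l₁ ≤ Real.sqrt n * l₂)
    (C : Set (EuclideanSpace ℝ (Fin n)))
    (hC : C = {c | (∀ i, 0 ≤ c i) ∧ ∑ i, c i = l₁})
    (I : Set (Fin n))
    (CI : Set (EuclideanSpace ℝ (Fin n)))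
    (hCI : CI = {c ∈ C | ∀ i ∉ I, c i = 0})
    (D : Set (EuclideanSpace ℝ (Fin n)))
    (hD : D = {s | (∀ i, 0 ≤ s i) ∧ l1 s = l₁ ∧ ‖s‖ = l₂})
    (v : EuclideanSpace ℝ (Fin n)) (hv : v ∈ CI) (hvn : ‖v‖ < l₂)
    (q : EuclideanSpace ℝ (Fin n)) (hq : q ∈ projSet D v) :
    ∀ i ∉ I, q i = 0 := by
  subst hC hD
  subst hCI
  intro j hj
  by_contra hqj
  obtain ⟨⟨hv0, hvsum⟩, hvI⟩ := hv
  obtain ⟨⟨hq0, hql1, hqn⟩, hqmin⟩ := hq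
  have hvj : v j = 0 := hvI j hj
  have hqjpos : 0 < q j := lt_of_le_of_ne (hq0 j) (Ne.symm hqj)
  have hqsum : ∑ k, q k = l₁ := by
    rw [← hql1]
    simp only [l1]
    exact Finset.sum_congr rfl fun k _ => (abs_of_nonneg (hq0 k)).symm
  -- find i with q i < v i
  have hex : ∃ i, q i < v i := by
    by_contra h
    push_neg at h
    have hlt : ∑ k, v k < ∑ k, q k := by
      apply Finset.sum_lt_sum (fun k _ => h k)
      exact ⟨j, Finset.mem_univ j, by rw [hvj]; exact hqjpos⟩
    rw [hvsum, hqsum] at hlt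
    exact lt_irrefl _ hlt
  obtain ⟨i, hi⟩ := hex
  have hij : i ≠ j := by
    rintro rfl
    rw [hvj] at hi
    exact absurd (hq0 i) (not_le.mpr hi)
  -- the shifted point s
  obtain ⟨s, hsi, hsj, hsk⟩ :
      ∃ s : EuclideanSpace ℝ (Fin n),
        s i = q i + q j ∧ s j = 0 ∧ ∀ k, k ≠ i → k ≠ j → s k = q k := by
    refine ⟨(WithLp.toLp 2 (fun k => if k = i then q i + q j else if k = j then 0 else q k) :
      EuclideanSpace ℝ (Fin n)), ?_, ?_, ?_⟩
    · simp
    · simp [Ne.symm hij]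
    · intro k h1 h2
      simp [h1, h2]
  have key : ∀ f : Fin n → ℝ, (∀ k, k ≠ i → k ≠ j → f k = 0) →
      ∑ k, f k = f i + f j := by
    intro f hf
    rw [← Finset.sum_pair hij]
    symm
    apply Finset.sum_subset (Finset.subset_univ _)
    intro k _ hk
    simp only [Finset.mem_insert, Finset.mem_singleton, not_or] at hk
    exact hf k hk.1 hk.2
  have hs0 : ∀ k, 0 ≤ s k := by
    intro k
    rcases eq_or_ne k i with rfl | h1
    · rw [hsi]; exact add_nonneg (hq0 _) (hq0 _)
    rcases eq_or_ne k j with rfl | h2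
    · rw [hsj]
    · rw [hsk k h1 h2]; exact hq0 k
  have hssum : ∑ k, s k = l₁ := by
    have h := key (fun k => s k - q k) (fun k h1 h2 => by simp only [hsk k h1 h2]; ring)
    simp only [hsi, hsj] at h
    have h2 : ∑ k, (s k - q k) = (∑ k, s k) - ∑ k, q k := Finset.sum_sub_distrib _ _
    rw [h2, hqsum] at h
    linarith
  have hsnormsq : ‖s‖ ^ 2 = l₂ ^ 2 + 2 * q i * q j := by
    have h := key (fun k => s k ^ 2 - q k ^ 2) (fun k h1 h2 => by simp only [hsk k h1 h2]; ring)
    simp only [hsi, hsj] at h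
    have h2 : ∑ k, (s k ^ 2 - q k ^ 2) = (∑ k, s k ^ 2) - ∑ k, q k ^ 2 :=
      Finset.sum_sub_distrib _ _
    rw [h2] at h
    rw [normsq_eq]
    have hqnsq : ∑ k, q k ^ 2 = l₂ ^ 2 := by rw [← normsq_eq, hqn]
    rw [hqnsq] at h
    nlinarith [h]
  have hsge : l₂ ≤ ‖s‖ := by
    have : l₂ ^ 2 ≤ ‖s‖ ^ 2 := by nlinarith [hq0 i, hqjpos.le]
    nlinarith [norm_nonneg s, h2.le]
  have hdistsq : ‖s - v‖ ^ 2 < ‖q - v‖ ^ 2 := by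
    have h := key (fun k => (s k - v k) ^ 2 - (q k - v k) ^ 2)
      (fun k h1 h2 => by simp only [hsk k h1 h2]; ring)
    simp only [hsi, hsj, hvj] at h
    have h2 : ∑ k, ((s k - v k) ^ 2 - (q k - v k) ^ 2)
        = (∑ k, (s k - v k) ^ 2) - ∑ k, (q k - v k) ^ 2 := Finset.sum_sub_distrib _ _
    rw [h2] at h
    have e1 : ‖s - v‖ ^ 2 = ∑ k, (s k - v k) ^ 2 := by
      rw [normsq_eq]
      exact Finset.sum_congr rfl fun k _ => by simp [PiLp.sub_apply]
    have e2 : ‖q - v‖ ^ 2 = ∑ k, (q k - v k) ^ 2 := by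
      rw [normsq_eq]
      exact Finset.sum_congr rfl fun k _ => by simp [PiLp.sub_apply]
    rw [e1, e2]
    nlinarith [h, hqjpos, hi]
  have hdist : ‖s - v‖ < ‖q - v‖ :=
    lt_of_pow_lt_pow_left₀ 2 (norm_nonneg _) hdistsq
  -- intermediate value: find point of D on segment from v to s
  have hcont : Continuous (fun t : ℝ => ‖v + t • (s - v)‖) :=
    (continuous_const.add (continuous_id.smul continuous_const)).norm
  have hmem : l₂ ∈ Set.Icc (‖v + (0:ℝ) • (s - v)‖) (‖v + (1:ℝ) • (s - v)‖) := by
    constructor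
    · simpa using hvn.le
    · simpa using hsge
  obtain ⟨t, ht01, htn⟩ := intermediate_value_Icc zero_le_one hcont.continuousOn hmem
  set x : EuclideanSpace ℝ (Fin n) := v + t • (s - v) with hx
  have hxapp : ∀ k, x k = v k + t * (s k - v k) := fun k => rfl
  have hx0 : ∀ k, 0 ≤ x k := by
    intro k
    rw [hxapp k]
    nlinarith [hv0 k, hs0 k, ht01.1, ht01.2]
  have hxsum : ∑ k, x k = l₁ := by
    have : ∑ k, x k = ∑ k, (v k + t * (s k - v k)) :=
      Finset.sum_congr rfl fun k _ => hxapp k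
    rw [this, Finset.sum_add_distrib, ← Finset.mul_sum, Finset.sum_sub_distrib,
      hvsum, hssum]
    ring
  have hxD : x ∈ {s : EuclideanSpace ℝ (Fin n) |
      (∀ i, 0 ≤ s i) ∧ l1 s = l₁ ∧ ‖s‖ = l₂} := by
    refine ⟨hx0, ?_, htn⟩
    rw [l1, ← hxsum]
    exact Finset.sum_congr rfl fun k _ => abs_of_nonneg (hx0 k)
  have hle := hqmin x hxD
  have hxv : x - v = t • (s - v) := by rw [hx]; abel
  have : ‖x - v‖ ≤ ‖s - v‖ := by
    rw [hxv, norm_smul, Real.norm_eq_abs, abs_of_nonneg ht01.1]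
    nlinarith [norm_nonneg (s - v), ht01.2]
  linarith

end
end

section
/- Let s ∈ L \ C (s is on the hypercircle L = H ∩ K but not in the simplex C) and let r ∈ proj_C(s) with r = max(s − t̂·e, 0) for the separator t̂ given by the simplex-projection characterization. Then t̂ ≥ 0. -/
noncomputable section

theorem simplex_projection_separator_nonneg
    {n : ℕ} (l₁ l₂ : ℝ) (h1 : 0 < l₁) (h2 : 0 < l₂)
    (hlow : l₂ ≤ l₁) (hhigh : l₁ ≤ Real.sqrt n * l₂)
    (L C : Set (EuclideanSpace ℝ (Fin n)))
    (hL : L = {q | ∑ i, q i = l₁ ∧ ‖q‖ = l₂})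
    (hC : C = {c | (∀ i, 0 ≤ c i) ∧ ∑ i, c i = l₁})
    (s : EuclideanSpace ℝ (Fin n)) (hsL : s ∈ L) (hsC : s ∉ C)
    (r : EuclideanSpace ℝ (Fin n)) (hr : r ∈ projSet C s)
    (t : ℝ) (ht : r = (WithLp.toLp 2 (fun i => max (s i - t) 0) : EuclideanSpace ℝ (Fin n))) :
    0 ≤ t := by
  by_contra hneg
  push_neg at hneg
  have hn : 0 < n := by
    by_contra h
    have hn0 : n = 0 := by omega
    subst hn0
    rw [hL] at hsL
    have := hsL.1
    simp at this
    linarith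
  have hrC := hr.1
  rw [hC] at hrC
  have hsum_r : ∑ i, r i = l₁ := hrC.2
  rw [hL] at hsL
  have hsum_s : ∑ i, s i = l₁ := hsL.1
  have hle : ∀ i, s i - t ≤ r i := by
    intro i
    rw [ht]
    exact le_max_left _ _
  have hsum : ∑ i : Fin n, (s i - t) ≤ ∑ i, r i :=
    Finset.sum_le_sum (fun i _ => hle i)
  rw [Finset.sum_sub_distrib, Finset.sum_const, Finset.card_univ,
    Fintype.card_fin, hsum_s, hsum_r] at hsum
  have hnr : (0:ℝ) < n := Nat.cast_pos.mpr hn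
  simp only [nsmul_eq_mul] at hsum
  nlinarith

end
end

section
/- Let s ∈ L \ C and let p be any best approximation to s from D = {q ∈ ℝ≥0ⁿ : ‖q‖₁ = λ₁, ‖q‖₂ = λ₂}. Then p_i = 0 for every coordinate i with s_i ≤ 0. -/
noncomputable section

set_option maxHeartbeats 1000000 in
theorem proj_zero_on_nonpositive_entries
    {n : ℕ} (l₁ l₂ : ℝ) (h1 : 0 < l₁) (h2 : 0 < l₂)
    (hlow : l₂ ≤ l₁) (hhigh : l₁ ≤ Real.sqrt n * l₂)
    (L C D : Set (EuclideanSpace ℝ (Fin n)))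
    (hL : L = {q | ∑ i, q i = l₁ ∧ ‖q‖ = l₂})
    (hC : C = {c | (∀ i, 0 ≤ c i) ∧ ∑ i, c i = l₁})
    (hD : D = {q | (∀ i, 0 ≤ q i) ∧ l1 q = l₁ ∧ ‖q‖ = l₂})
    (s : EuclideanSpace ℝ (Fin n)) (hsL : s ∈ L) (hsC : s ∉ C)
    (p : EuclideanSpace ℝ (Fin n)) (hp : p ∈ projSet D s) :
    ∀ i, s i ≤ 0 → p i = 0 := by
  subst hL hC hD
  obtain ⟨⟨hpnn, hpl1, hpnorm⟩, hopt⟩ := hp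
  obtain ⟨hssum, hsnorm⟩ := hsL
  intro i hsi
  by_contra hpne
  have hpi : 0 < p i := lt_of_le_of_ne (hpnn i) (Ne.symm hpne)
  -- squared-sum facts
  have nsq : ∀ x : EuclideanSpace ℝ (Fin n), ‖x‖ = l₂ → ∑ k, x k ^ 2 = l₂ ^ 2 := by
    intro x hx
    have := congrArg (· ^ 2) hx
    rw [EuclideanSpace.norm_eq] at this
    simp only [Real.norm_eq_abs, sq_abs] at this
    rwa [Real.sq_sqrt (by positivity)] at this
  have hps2 : ∑ k, p k ^ 2 = l₂ ^ 2 := nsq p hpnorm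
  have hss2 : ∑ k, s k ^ 2 = l₂ ^ 2 := nsq s hsnorm
  have hpsum : ∑ k, p k = l₁ := by
    rw [← hpl1, l1]
    exact Finset.sum_congr rfl fun k _ => (abs_of_nonneg (hpnn k)).symm
  have expand : ∀ x : EuclideanSpace ℝ (Fin n),
      ∑ k, (x k - s k) ^ 2 = ∑ k, x k ^ 2 - 2 * (∑ k, x k * s k) + ∑ k, s k ^ 2 := by
    intro x
    rw [Finset.mul_sum, ← Finset.sum_sub_distrib, ← Finset.sum_add_distrib]
    exact Finset.sum_congr rfl fun k _ => by ring
  -- optimality: p maximizes ∑ q k * s k over D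
  have key : ∀ q : EuclideanSpace ℝ (Fin n), (∀ k, 0 ≤ q k) → (∑ k, q k = l₁) →
      (∑ k, q k ^ 2 = l₂ ^ 2) → ∑ k, q k * s k ≤ ∑ k, p k * s k := by
    intro q hqnn hqsum hqsq
    have hqnorm : ‖q‖ = l₂ := by
      rw [EuclideanSpace.norm_eq]
      simp only [Real.norm_eq_abs, sq_abs]
      rw [hqsq, Real.sqrt_sq h2.le]
    have hql1 : l1 q = l₁ := by
      rw [l1, ← hqsum]
      exact Finset.sum_congr rfl fun k _ => abs_of_nonneg (hqnn k)
    have h := hopt q ⟨hqnn, hql1, hqnorm⟩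
    have h' : ‖p - s‖ ^ 2 ≤ ‖q - s‖ ^ 2 := by
      exact pow_le_pow_left₀ (norm_nonneg _) h 2
    have hpq : ∀ x : EuclideanSpace ℝ (Fin n), ‖x - s‖ ^ 2 = ∑ k, (x k - s k) ^ 2 := by
      intro x
      rw [EuclideanSpace.norm_eq, Real.sq_sqrt (by positivity)]
      exact Finset.sum_congr rfl fun k _ => by
        simp [Real.norm_eq_abs, sq_abs]
    rw [hpq p, hpq q, expand p, expand q, hps2, hqsq] at h'
    linarith
  -- find j with p j < s j
  have hsp : ∃ j, p j < s j := by
    by_contra hcon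
    push_neg at hcon
    apply hsC
    have hz : ∑ k, (p k - s k) = 0 := by
      rw [Finset.sum_sub_distrib, hpsum, hssum, sub_self]
    have hall := (Finset.sum_eq_zero_iff_of_nonneg
      (fun k _ => sub_nonneg.mpr (hcon k))).mp hz
    refine ⟨fun k => ?_, hssum⟩
    have h := hall k (Finset.mem_univ k)
    have := hpnn k
    linarith
  obtain ⟨j, hj⟩ := hsp
  have hsj : 0 < s j := lt_of_le_of_lt (hpnn j) hj
  have hij : i ≠ j := fun h => by rw [h] at hsi; linarith
  have hcpos : 0 < s j - s i := by linarith
  by_cases hb : p j < p i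
  · -- swap coordinates i and j of p: strictly better point of D
    set q : EuclideanSpace ℝ (Fin n) := WithLp.toLp 2 (fun k => p (Equiv.swap i j k)) with hqdef
    have hqnn : ∀ k, 0 ≤ q k := fun k => hpnn _
    have hqsum : ∑ k, q k = l₁ := by
      rw [← hpsum]; exact Equiv.sum_comp (Equiv.swap i j) p
    have hqsq : ∑ k, q k ^ 2 = l₂ ^ 2 := by
      rw [← hps2]; exact Equiv.sum_comp (Equiv.swap i j) (fun k => p k ^ 2)
    have hkey := key q hqnn hqsum hqsq
    have hdiff : ∑ k, q k * s k - ∑ k, p k * s k = (p i - p j) * (s j - s i) := by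
      rw [← Finset.sum_sub_distrib]
      have hqi : q i = p j := by
        simp only [hqdef]; rw [Equiv.swap_apply_left]
      have hqj : q j = p i := by
        simp only [hqdef]; rw [Equiv.swap_apply_right]
      have hqo : ∀ k, k ≠ i → k ≠ j → q k = p k := by
        intro k h1' h2'
        simp only [hqdef]; rw [Equiv.swap_apply_of_ne_of_ne h1' h2']
      have e : ∀ k ∈ Finset.univ (α := Fin n), q k * s k - p k * s k =
          (if k = i then (p j - p i) * s i else 0) +
          (if k = j then (p i - p j) * s j else 0) := by
        intro k _
        rcases eq_or_ne k i with rfl | hki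
        · rw [hqi, if_pos rfl, if_neg hij]
          ring
        · rcases eq_or_ne k j with rfl | hkj
          · rw [hqj, if_pos rfl, if_neg hki]
            ring
          · rw [hqo k hki hkj, if_neg hki, if_neg hkj]
            ring
      rw [Finset.sum_congr rfl e, Finset.sum_add_distrib, Finset.sum_ite_eq',
        Finset.sum_ite_eq']
      simp only [Finset.mem_univ, if_pos]
      ring
    linarith [hdiff, hkey, mul_pos (sub_pos.mpr hb) hcpos]
  · push_neg at hb
    -- p i ≤ p j : move δ from coordinate i to j, then contract toward the mean
    have hn : 0 < (n : ℝ) := by exact_mod_cast i.pos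
    set μ : ℝ := l₁ / n with hμ
    have hμpos : 0 < μ := div_pos h1 hn
    have hnμ : (n : ℝ) * μ = l₁ := by rw [hμ]; field_simp
    set b : ℝ := p j - p i with hbdef
    have hb0 : 0 ≤ b := by rw [hbdef]; linarith
    set c : ℝ := s j - s i with hcdef
    set ρ2 : ℝ := l₂ ^ 2 - l₁ ^ 2 / n with hρ2def
    have expand2 : ∀ (x : Fin n → ℝ) (a : ℝ),
        ∑ k, (x k - a) ^ 2 = ∑ k, x k ^ 2 - 2 * a * (∑ k, x k) + (n : ℝ) * a ^ 2 := by
      intro x a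
      rw [Finset.mul_sum, ← Finset.sum_sub_distrib]
      have hconst : (n : ℝ) * a ^ 2 = ∑ _k : Fin n, a ^ 2 := by
        rw [Finset.sum_const, Finset.card_univ, Fintype.card_fin, nsmul_eq_mul]
      rw [hconst, ← Finset.sum_add_distrib]
      exact Finset.sum_congr rfl fun k _ => by ring
    have hsmean : ∑ k, (s k - μ) ^ 2 = ρ2 := by
      rw [expand2, hss2, hssum, hρ2def, hμ]
      field_simp
      ring
    have hρ2pos : 0 < ρ2 := by
      rw [← hsmean]
      refine Finset.sum_pos' (fun k _ => sq_nonneg _) ⟨i, Finset.mem_univ i, ?_⟩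
      have hneg : s i - μ < 0 := by linarith
      rw [sq]
      exact mul_pos_of_neg_of_neg hneg hneg
    have hcb : 0 < c - b := by rw [hcdef, hbdef]; linarith
    set δ : ℝ := min (p i) ((c - b) / 2) with hδdef
    have hδpos : 0 < δ := lt_min hpi (by linarith)
    have hδpi : δ ≤ p i := min_le_left _ _
    have hδcb : δ ≤ (c - b) / 2 := min_le_right _ _
    set w2 : ℝ := ρ2 + 2 * δ * b + 2 * δ ^ 2 with hw2def
    have hρ2w2 : ρ2 ≤ w2 := by
      rw [hw2def]
      linarith [mul_nonneg hδpos.le hb0, sq_nonneg δ]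
    have hw2pos : 0 < w2 := lt_of_lt_of_le hρ2pos hρ2w2
    set ρ : ℝ := Real.sqrt ρ2 with hρdef
    set w : ℝ := Real.sqrt w2 with hwdef
    have hρpos : 0 < ρ := Real.sqrt_pos.mpr hρ2pos
    have hwpos : 0 < w := Real.sqrt_pos.mpr hw2pos
    have hρsq : ρ ^ 2 = ρ2 := Real.sq_sqrt hρ2pos.le
    have hwsq : w ^ 2 = w2 := Real.sq_sqrt hw2pos.le
    have hρw : ρ ≤ w := Real.sqrt_le_sqrt hρ2w2
    set r : ℝ := ρ / w with hrdef
    have hr0 : 0 < r := div_pos hρpos hwpos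
    have hr1 : r ≤ 1 := (div_le_one hwpos).mpr hρw
    have hrw : r * w = ρ := div_mul_cancel₀ _ hwpos.ne'
    have hr2w2 : r ^ 2 * w2 = ρ2 := by
      have h' : (r * w) ^ 2 = ρ ^ 2 := by rw [hrw]
      calc r ^ 2 * w2 = (r * w) ^ 2 := by rw [← hwsq]; ring
        _ = ρ2 := by rw [h', hρsq]
    set u : Fin n → ℝ :=
      fun k => p k + (if k = j then δ else 0) - (if k = i then δ else 0) with hudef
    have hui : u i = p i - δ := by
      simp [hudef, hij]
    have huj : u j = p j + δ := by
      simp [hudef, Ne.symm hij]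
    have huk : ∀ k, k ≠ i → k ≠ j → u k = p k := by
      intro k h1' h2'
      simp only [hudef, if_neg h1', if_neg h2']; ring
    have hunn : ∀ k, 0 ≤ u k := by
      intro k
      rcases eq_or_ne k i with hki | hki
      · rw [hki, hui]; linarith
      · rcases eq_or_ne k j with hkj | hkj
        · rw [hkj, huj]; have := hpnn j; linarith
        · rw [huk k hki hkj]; exact hpnn k
    have husum : ∑ k, u k = l₁ := by
      simp only [hudef]
      rw [Finset.sum_sub_distrib, Finset.sum_add_distrib, Finset.sum_ite_eq',
        Finset.sum_ite_eq']
      simp [hpsum]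
    have husq : ∑ k, u k ^ 2 = l₂ ^ 2 + 2 * δ * b + 2 * δ ^ 2 := by
      have e : ∀ k ∈ Finset.univ (α := Fin n), u k ^ 2 = p k ^ 2 +
          ((if k = j then 2 * δ * p j + δ ^ 2 else 0) +
           (if k = i then δ ^ 2 - 2 * δ * p i else 0)) := by
        intro k _
        rcases eq_or_ne k i with rfl | hki
        · rw [hui, if_pos rfl, if_neg hij]; ring
        · rcases eq_or_ne k j with rfl | hkj
          · rw [huj, if_pos rfl, if_neg hki]; ring
          · rw [huk k hki hkj, if_neg hki, if_neg hkj]; ring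
      rw [Finset.sum_congr rfl e, Finset.sum_add_distrib, Finset.sum_add_distrib,
        Finset.sum_ite_eq', Finset.sum_ite_eq']
      simp only [Finset.mem_univ, if_pos, hps2]
      rw [hbdef]; ring
    have huw2 : ∑ k, (u k - μ) ^ 2 = w2 := by
      rw [expand2, husq, husum, hw2def, hρ2def, hμ]
      field_simp
      ring
    set q : EuclideanSpace ℝ (Fin n) := WithLp.toLp 2 (fun k => μ + r * (u k - μ)) with hqdef
    have hqk : ∀ k, q k = (1 - r) * μ + r * u k := by
      intro k; simp only [hqdef]; ring
    have hqnn : ∀ k, 0 ≤ q k := by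
      intro k
      rw [hqk]
      exact add_nonneg (mul_nonneg (by linarith) hμpos.le)
        (mul_nonneg hr0.le (hunn k))
    have hzsum : ∑ k, (u k - μ) = 0 := by
      rw [Finset.sum_sub_distrib, husum, Finset.sum_const, Finset.card_univ,
        Fintype.card_fin, nsmul_eq_mul, hnμ, sub_self]
    have hqsum : ∑ k, q k = l₁ := by
      simp only [hqdef]
      rw [Finset.sum_add_distrib, ← Finset.mul_sum, hzsum, Finset.sum_const,
        Finset.card_univ, Fintype.card_fin, nsmul_eq_mul, hnμ]
      ring
    have hqsq : ∑ k, q k ^ 2 = l₂ ^ 2 := by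
      have e : ∀ k ∈ Finset.univ (α := Fin n), q k ^ 2 =
          μ ^ 2 + 2 * μ * r * (u k - μ) + r ^ 2 * (u k - μ) ^ 2 := by
        intro k _; simp only [hqdef]; ring
      rw [Finset.sum_congr rfl e, Finset.sum_add_distrib, Finset.sum_add_distrib,
        ← Finset.mul_sum, ← Finset.mul_sum, hzsum, huw2, hr2w2, Finset.sum_const,
        Finset.card_univ, Fintype.card_fin, nsmul_eq_mul]
      rw [hρ2def, hμ]
      field_simp
      ring
    -- Cauchy–Schwarz
    have hCS : ∑ k, p k * s k ≤ l₂ ^ 2 := by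
      have h' := real_inner_le_norm p s
      rw [PiLp.inner_apply] at h'
      rw [hpnorm, hsnorm] at h'
      rw [sq]
      exact le_trans (le_of_eq (Finset.sum_congr rfl fun k _ => by simp [mul_comm])) h'
    -- the improvement
    have hdiff : ∑ k, q k * s k - ∑ k, p k * s k =
        (1 - r) * (μ * l₁ - ∑ k, p k * s k) + r * δ * c := by
      rw [← Finset.sum_sub_distrib]
      have e : ∀ k ∈ Finset.univ (α := Fin n), q k * s k - p k * s k =
          ((1 - r) * (μ * s k) - (1 - r) * (p k * s k)) +
          ((if k = j then r * δ * s j else 0) - (if k = i then r * δ * s i else 0)) := by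
        intro k _
        rw [hqk]
        rcases eq_or_ne k i with rfl | hki
        · rw [hui, if_pos rfl, if_neg hij]; ring
        · rcases eq_or_ne k j with rfl | hkj
          · rw [huj, if_pos rfl, if_neg hki]; ring
          · rw [huk k hki hkj, if_neg hki, if_neg hkj]; ring
      rw [Finset.sum_congr rfl e, Finset.sum_add_distrib, Finset.sum_sub_distrib,
        Finset.sum_sub_distrib, Finset.sum_ite_eq', Finset.sum_ite_eq',
        ← Finset.mul_sum, ← Finset.mul_sum, ← Finset.mul_sum, hssum]
      simp only [Finset.mem_univ, if_pos]
      rw [hcdef]; ring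
    have hkey2 : (1 - r) * ρ2 < r * δ * c := by
      have hw_ρ : (w - ρ) * (w + ρ) = 2 * δ * b + 2 * δ ^ 2 := by
        linear_combination hwsq - hρsq + hw2def
      have hbc : b + δ < c := by linarith
      have step : (w - ρ) * ρ2 * (w + ρ) < ρ * (δ * c) * (w + ρ) := by
        have e1 : (w - ρ) * ρ2 * (w + ρ) = ρ2 * (2 * δ * b + 2 * δ ^ 2) := by
          linear_combination ρ2 * hw_ρ
        have e2 : ρ2 * (2 * δ * b + 2 * δ ^ 2) < ρ2 * (2 * δ * c) := by
          apply mul_lt_mul_of_pos_left _ hρ2pos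
          have h9 : δ * (b + δ) < δ * c := mul_lt_mul_of_pos_left hbc hδpos
          calc 2 * δ * b + 2 * δ ^ 2 = 2 * (δ * (b + δ)) := by ring
            _ < 2 * (δ * c) := by linarith
            _ = 2 * δ * c := by ring
        have e3 : ρ2 * (2 * δ * c) ≤ ρ * (δ * c) * (w + ρ) := by
          have hc0 : 0 < c := by rw [hcdef]; linarith
          have : ρ2 * (2 * δ * c) = ρ * (δ * c) * (2 * ρ) := by
            rw [← hρsq]; ring
          rw [this]
          apply mul_le_mul_of_nonneg_left _ (by positivity)
          linarith
        linarith
      have hwρpos : 0 < w + ρ := by linarith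
      have step2 : (w - ρ) * ρ2 < ρ * (δ * c) :=
        lt_of_mul_lt_mul_right (by linarith [step]) hwρpos.le
      have hrew : (1 - r) * ρ2 * w = (w - ρ) * ρ2 := by
        have : (1 - r) * w = w - ρ := by
          rw [hrdef]; field_simp
        linear_combination ρ2 * this
      have hrew2 : r * δ * c * w = ρ * (δ * c) := by
        have : r * w = ρ := hrw
        linear_combination δ * c * this
      have : (1 - r) * ρ2 * w < r * δ * c * w := by
        rw [hrew, hrew2]; exact step2
      exact lt_of_mul_lt_mul_right (by linarith [this]) hwpos.le
    have hμl : μ * l₁ = l₁ ^ 2 / n := by rw [hμ]; ring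
    have hlow2 : μ * l₁ - ∑ k, p k * s k ≥ -ρ2 := by
      rw [hμl, hρ2def]; linarith
    have hmono : (1 - r) * (μ * l₁ - ∑ k, p k * s k) ≥ (1 - r) * (-ρ2) :=
      mul_le_mul_of_nonneg_left hlow2 (by linarith)
    have hkeyq := key q hqnn hqsum hqsq
    linarith [hdiff, hkey2, hmono, hkeyq]
end
end
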